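/- Consider the argumentation framework with arguments {a, b, b', c, c'} and defeats b→a, c→a, b→b', b'→b, c→c', c'→c. For any number of agents n divisible by 3, there exists no aggregation operator F satisfying No-Tie Universal Domain, Weak Systematicity, Anonymity, Collective Rationality, and Supportiveness. -/
import Mathlib


inductive Label : Type
  | inn | out | undec
  deriving DecidableEq

def Complete {A : Type} (att : A → A → Prop) (L : A → Label) : Prop :=
  (∀ a, L a = Label.inn → ∀ b, att b a → L b = Label.out) ∧
  (∀ a, L a = Label.out → ∃ b, att b a ∧ L b = Label.inn) ∧
  (∀ a, L a = Label.undec →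
    (∃ b, att b a ∧ L b = Label.undec) ∧ ¬ ∃ b, att b a ∧ L b = Label.inn)

/-- Number of agents labelling argument `a` with label `l` in profile `P`. -/
def count {A : Type} {n : ℕ} (P : Fin n → A → Label) (a : A) (l : Label) : ℕ :=
  (Finset.univ.filter fun i => P i a = l).card

/-- `l` is the strict plurality winner for argument `a` in profile `P`. -/
def IsPlu {A : Type} {n : ℕ} (P : Fin n → A → Label) (a : A) (l : Label) : Prop :=
  ∀ l', l' ≠ l → count P a l' < count P a l

/-- The argument-wise plurality rule is defined on `P` (no ties). -/
def PluDefined {A : Type} {n : ℕ} (P : Fin n → A → Label) : Prop :=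
  ∀ a, ∃ l, IsPlu P a l

def InSync {A : Type} (att : A → A → Prop) (a b : A) : Prop :=
  (∀ L, Complete att L → L a = L b) ∨
  (∀ L, Complete att L →
    ((L a = Label.inn ↔ L b = Label.out) ∧ (L a = Label.out ↔ L b = Label.inn)))

inductive Arg : Type
  | a | b | b' | c | c'
  deriving DecidableEq

instance : Fintype Arg :=
  ⟨⟨{Arg.a, Arg.b, Arg.b', Arg.c, Arg.c'}, by decide⟩, by intro x; cases x <;> decide⟩

/-- Defeats: b→a, c→a, b→b', b'→b, c→c', c'→c. -/
def att8 : Arg → Arg → Prop := fun x y =>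
  (x = Arg.b ∧ y = Arg.a) ∨ (x = Arg.c ∧ y = Arg.a) ∨
  (x = Arg.b ∧ y = Arg.b') ∨ (x = Arg.b' ∧ y = Arg.b) ∨
  (x = Arg.c ∧ y = Arg.c') ∨ (x = Arg.c' ∧ y = Arg.c)

/-- The profile of complete labellings causes no ties. -/
def NoTie {n : ℕ} (P : Fin n → {L : Arg → Label // Complete att8 L}) : Prop :=
  PluDefined (fun i => (P i).1)

instance : DecidableRel att8 := fun x y => by unfold att8; infer_instance

/-- L1 = ({b,c'},{a,b',c},{}) -/
def Lab1 : Arg → Label := fun x =>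
  match x with
  | Arg.b => Label.inn | Arg.c' => Label.inn | _ => Label.out

/-- L2 = ({b',c},{a,b,c'},{}) -/
def Lab2 : Arg → Label := fun x =>
  match x with
  | Arg.b' => Label.inn | Arg.c => Label.inn | _ => Label.out

/-- L3 = ({a,b',c'},{b,c},{}) -/
def Lab3 : Arg → Label := fun x =>
  match x with
  | Arg.a => Label.inn | Arg.b' => Label.inn | Arg.c' => Label.inn | _ => Label.out

lemma hLab1 : Complete att8 Lab1 := by unfold Complete; decide
lemma hLab2 : Complete att8 Lab2 := by unfold Complete; decide
lemma hLab3 : Complete att8 Lab3 := by unfold Complete; decide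

def G3 : Fin 3 → {L : Arg → Label // Complete att8 L} := fun k =>
  if k = 0 then ⟨Lab1, hLab1⟩ else if k = 1 then ⟨Lab2, hLab2⟩ else ⟨Lab3, hLab3⟩

/-- The profile where agents are split in three equal blocks. -/
def Pm (m : ℕ) : Fin (3 * m) → {L : Arg → Label // Complete att8 L} :=
  fun i => G3 (finProdFinEquiv.symm i).1

lemma count_perm {A : Type} {n : ℕ} (P : Fin n → A → Label)
    (ρ : Equiv.Perm (Fin n)) (x : A) (l : Label) :
    count (fun i => P (ρ i) ) x l = count P x l := by
  unfold count
  exact Finset.card_equiv ρ (by simp)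

lemma notie_perm {n : ℕ} (P : Fin n → {L : Arg → Label // Complete att8 L})
    (ρ : Equiv.Perm (Fin n)) (h : NoTie P) : NoTie (fun i => P (ρ i)) := by
  intro x
  obtain ⟨l, hl⟩ := h x
  exact ⟨l, fun l' hl' => by
    have := hl l' hl'
    simpa [count_perm (fun i => (P i).1) ρ] using this⟩

lemma count_Pm (m : ℕ) (x : Arg) (l : Label) :
    count (fun i => (Pm m i).1) x l
      = (Finset.univ.filter fun k : Fin 3 => (G3 k).1 x = l).card * m := by
  unfold count
  have h1 : (Finset.univ.filter fun i : Fin (3 * m) => (Pm m i).1 x = l).card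
      = ((Finset.univ.filter fun k : Fin 3 => (G3 k).1 x = l) ×ˢ
          (Finset.univ : Finset (Fin m))).card := by
    apply Finset.card_equiv finProdFinEquiv.symm
    intro i
    simp [Pm, Finset.mem_product]
  rw [h1, Finset.card_product, Finset.card_univ, Fintype.card_fin]

lemma notie_Pm (m : ℕ) (hm : 0 < m) : NoTie (Pm m) := by
  intro x
  have key : ∀ l : Label,
      ((Finset.univ.filter fun k : Fin 3 => (G3 k).1 x = l).card = 1 ∨
        (Finset.univ.filter fun k : Fin 3 => (G3 k).1 x = l).card = 0) →
      ∀ lw : Label,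
      (Finset.univ.filter fun k : Fin 3 => (G3 k).1 x = lw).card = 2 →
      l ≠ lw → count (fun i => (Pm m i).1) x l < count (fun i => (Pm m i).1) x lw := by
    intro l hl lw hlw _
    rw [count_Pm, count_Pm, hlw]
    rcases hl with h | h <;> rw [h] <;> omega
  cases x
  · exact ⟨Label.out, fun l' hl' => by
      cases l' <;> first | (exact absurd rfl hl') |
        exact key _ (by decide) _ (by decide) hl'⟩
  · exact ⟨Label.out, fun l' hl' => by
      cases l' <;> first | (exact absurd rfl hl') |
        exact key _ (by decide) _ (by decide) hl'⟩
  · exact ⟨Label.inn, fun l' hl' => by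
      cases l' <;> first | (exact absurd rfl hl') |
        exact key _ (by decide) _ (by decide) hl'⟩
  · exact ⟨Label.out, fun l' hl' => by
      cases l' <;> first | (exact absurd rfl hl') |
        exact key _ (by decide) _ (by decide) hl'⟩
  · exact ⟨Label.inn, fun l' hl' => by
      cases l' <;> first | (exact absurd rfl hl') |
        exact key _ (by decide) _ (by decide) hl'⟩

/-- The block-rotation permutation: rotate the `Fin 3` coordinate by `s`. -/
def rotPerm (m : ℕ) (s : Fin 3) : Equiv.Perm (Fin (3 * m)) :=
  finProdFinEquiv.symm.trans
    (((Equiv.addRight s).prodCongr (Equiv.refl (Fin m))).trans finProdFinEquiv)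

lemma Pm_rot (m : ℕ) (s : Fin 3) (i : Fin (3 * m)) :
    Pm m (rotPerm m s i) = G3 ((finProdFinEquiv.symm i).1 + s) := by
  simp [Pm, rotPerm, Equiv.prodCongr]

/-- for this framework and any n divisible by 3, no aggregation operator
satisfies No-Tie Universal Domain, Weak Systematicity, Anonymity, Collective
Rationality, and Supportiveness. -/
theorem stmt8 {n : ℕ} (hn : 3 ∣ n) (hn0 : 0 < n) :
    ¬ ∃ F : (Fin n → {L : Arg → Label // Complete att8 L}) → Arg → Label,
      -- Weak Systematicity (on the no-tie domain)
      (∀ (P P' : Fin n → {L : Arg → Label // Complete att8 L}),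
        NoTie P → NoTie P' → ∀ (x y : Arg),
        (∀ i, (P i).1 x = (P' i).1 y) → F P x = F P' y) ∧
      -- Anonymity (on the no-tie domain)
      (∀ (P : Fin n → {L : Arg → Label // Complete att8 L}) (ρ : Equiv.Perm (Fin n)),
        NoTie P → NoTie (fun i => P (ρ i)) → F (fun i => P (ρ i)) = F P) ∧
      -- Collective Rationality (on the no-tie domain)
      (∀ P : Fin n → {L : Arg → Label // Complete att8 L},
        NoTie P → Complete att8 (F P)) ∧
      -- Supportiveness (on the no-tie domain)
      (∀ P : Fin n → {L : Arg → Label // Complete att8 L},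
        NoTie P → ∀ x : Arg, ∃ i, F P x = (P i).1 x) := by
  obtain ⟨m, rfl⟩ := hn
  have hm : 0 < m := by omega
  rintro ⟨F, hsys, hanon, hrat, hsupp⟩
  set P := Pm m with hP
  have hNT : NoTie P := notie_Pm m hm
  have hNTrot : ∀ s : Fin 3, NoTie (fun i => P (rotPerm m s i)) :=
    fun s => notie_perm P (rotPerm m s) hNT
  -- F P b = F P a
  have hGb : ∀ k : Fin 3, (G3 (k + 1)).1 Arg.b = (G3 k).1 Arg.a := by decide
  have hGc : ∀ k : Fin 3, (G3 (k + 2)).1 Arg.c = (G3 k).1 Arg.a := by decide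
  have hb : F P Arg.b = F P Arg.a := by
    have h1 : F (fun i => P (rotPerm m 1 i)) Arg.b = F P Arg.a := by
      apply hsys _ _ (hNTrot 1) hNT
      intro i
      have := Pm_rot m 1 i
      rw [hP, this]
      exact hGb _
    rw [← h1, hanon P (rotPerm m 1) hNT (hNTrot 1)]
  have hc : F P Arg.c = F P Arg.a := by
    have h1 : F (fun i => P (rotPerm m 2 i)) Arg.c = F P Arg.a := by
      apply hsys _ _ (hNTrot 2) hNT
      intro i
      have := Pm_rot m 2 i
      rw [hP, this]
      exact hGc _
    rw [← h1, hanon P (rotPerm m 2) hNT (hNTrot 2)]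
  -- supportiveness: F P a ≠ undec
  have hGa : ∀ k : Fin 3, (G3 k).1 Arg.a ≠ Label.undec := by decide
  have hnu : F P Arg.a ≠ Label.undec := by
    obtain ⟨i, hi⟩ := hsupp P hNT Arg.a
    rw [hi]
    exact hGa _
  obtain ⟨h1, h2, _⟩ := hrat P hNT
  cases hFa : F P Arg.a with
  | undec => exact hnu hFa
  | inn =>
      have := h1 Arg.a hFa Arg.b (by unfold att8; tauto)
      rw [hb, hFa] at this
      exact absurd this (by decide)
  | out =>
      obtain ⟨z, hz, hzin⟩ := h2 Arg.a hFa
      have hz' : z = Arg.b ∨ z = Arg.c := by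
        unfold att8 at hz; tauto
      rcases hz' with rfl | rfl
      · rw [hb, hFa] at hzin; exact absurd hzin (by decide)
      · rw [hc, hFa] at hzin; exact absurd hzin (by decide)
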